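/- Let w ∈ Σ*, ♯ ∉ Σ, and equip Σ ∪ {♯} with an arbitrary linear order. Then the lexicographic order of the cyclic shifts of w♯ coincides with the lexicographic order of the suffixes of w♯; consequently, the BW-array of w♯ equals the suffix array of w♯. -/

import Mathlib

/-- Cyclic addition of the constant `k` to all values of a permutation of
`{1, …, n}` (identifying positions/values with `Fin n`, 1-based position `i`
corresponding to `i - 1 : Fin n`): `(addConst π k) i = π i + k (mod n)`. -/
def addConst {n : ℕ} (π : Equiv.Perm (Fin n)) (k : ℕ) : Equiv.Perm (Fin n) :=
  π.trans (finRotate n ^ k)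

/-- The linking permutation `Φ(π) = π⁻¹ ∘ (π + 1)`, i.e.
`Φ(π) i = π⁻¹ (π i + 1)` with cyclic value addition (`n + 1 ≡ 1`). -/
def linkPerm {n : ℕ} (π : Equiv.Perm (Fin n)) : Equiv.Perm (Fin n) :=
  (π.trans (finRotate n)).trans π.symm

/-- A permutation has exactly one orbit: iterating it reaches any element from
any element. -/
def OneOrbit {n : ℕ} (φ : Equiv.Perm (Fin n)) : Prop :=
  ∀ x y : Fin n, ∃ m : ℕ, (φ ^ m) x = y

/-- The descent set of a permutation of `{1, …, n}`, as a set of 1-based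
positions: `i ∈ [1, n-1]` is a descent iff `φ(i) > φ(i+1)`.  The 1-based
position `i` corresponds to the element `i - 1 : Fin n`. -/
def desSet {n : ℕ} (φ : Equiv.Perm (Fin n)) : Set ℕ :=
  {i : ℕ | ∃ h : i < n, 1 ≤ i ∧
    φ ⟨i, h⟩ < φ ⟨i - 1, Nat.lt_of_le_of_lt (Nat.sub_le i 1) h⟩}

/-- `π` is the suffix array of the word `w` of length `n`: `π i` is the
(0-based) starting position of the `i`-th smallest suffix of `w` in the
lexicographic order on lists (a proper prefix precedes its extensions). -/
def IsSuffixArray {α : Type*} [LinearOrder α] {n : ℕ} (w : List α)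
    (π : Equiv.Perm (Fin n)) : Prop :=
  w.length = n ∧ ∀ i j : Fin n, i < j → w.drop (π i : ℕ) < w.drop (π j : ℕ)

/-- `π` is the Burrows–Wheeler array of the word `w` of length `n`: `π i` is
the (0-based) starting position of the `i`-th smallest cyclic shift of `w`. -/
def IsBWArray {α : Type*} [LinearOrder α] {n : ℕ} (w : List α)
    (π : Equiv.Perm (Fin n)) : Prop :=
  w.length = n ∧ ∀ i j : Fin n, i < j → w.rotate (π i : ℕ) < w.rotate (π j : ℕ)

/-- A word is primitive iff it is not a proper power of another word:
`w = v^k` implies `k = 1`. -/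
def Primitive {α : Type*} (w : List α) : Prop :=
  ∀ (v : List α) (k : ℕ), w = (List.replicate k v).flatten → k = 1

/-- From `σ ∈ S_n`, the permutation `π' = (n+1) σ(1) ⋯ σ(n) ∈ S_{n+1}`:
position `1` (element `0 : Fin (n+1)`) is sent to the value `n + 1`
(element `Fin.last n`), and position `i + 1` is sent to the value `σ(i)`. -/
def appendMax {n : ℕ} (σ : Equiv.Perm (Fin n)) : Equiv.Perm (Fin (n + 1)) :=
  ((finSuccEquiv n).trans σ.optionCongr).trans (finSuccEquiv' (Fin.last n)).symm

/-- Binomial coefficient with integer arguments, which is `0` when the lower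
index is negative or exceeds the upper index. -/
def intChoose (m r : ℤ) : ℕ :=
  if 0 ≤ r ∧ r ≤ m then m.toNat.choose r.toNat else 0

/-- `π ∈ S_{n+1}` is ascending-to-max.  Values are 1-based: the value
`i ∈ [1, n-1]` corresponds to `x.castSucc` where `x : Fin n` satisfies
`(x : ℕ) + 1 = i` … i.e. `x = i - 1`; the value `i + 1` corresponds to
`x.succ`, and the value `n + 1` corresponds to `Fin.last n`. -/
def AscendingToMax {n : ℕ} (π : Equiv.Perm (Fin (n + 1))) : Prop :=
  ∀ x : Fin n, (x : ℕ) + 1 < n →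
    (π.symm x.castSucc < π.symm (Fin.last n) →
      π.symm x.succ < π.symm (Fin.last n) →
      π.symm x.castSucc < π.symm x.succ) ∧
    (π.symm (Fin.last n) < π.symm x.castSucc →
      π.symm (Fin.last n) < π.symm x.succ →
      π.symm x.succ < π.symm x.castSucc)

/-- `π ∈ S_{n+1}` is non-nesting.  Values are 1-based: the values `i, j ∈ [1, n]`
correspond to `x.castSucc, y.castSucc` with `x, y : Fin n`, and the values
`i + 1, j + 1` to `x.succ, y.succ`. -/
def NonNesting {n : ℕ} (π : Equiv.Perm (Fin (n + 1))) : Prop :=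
  ∀ x y : Fin n, π.symm x.castSucc < π.symm y.castSucc →
    ((π.symm x.castSucc < π.symm x.succ ∧ π.symm y.castSucc < π.symm y.succ) ∨
      (π.symm x.succ < π.symm x.castSucc ∧ π.symm y.succ < π.symm y.castSucc)) →
    π.symm x.succ < π.symm y.succ

/-- For `w ∈ Σ*`, `♯ ∉ Σ` and an arbitrary linear order on
`Σ ∪ {♯}`: the lexicographic order of the cyclic shifts of `w♯` coincides with
the lexicographic order of the suffixes of `w♯`; consequently, any `π` is the
BW-array of `w♯` iff it is the suffix array of `w♯`. -/

theorem list_lt_iff_lex {α : Type*} [LinearOrder α] {l l' : List α} :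
    l < l' ↔ List.Lex (· < ·) l l' := Iff.rfl

theorem lex_append_iff {α : Type*} [LinearOrder α] :
    ∀ (a b x y : List α), ¬ a <+: b → ¬ b <+: a →
      (a ++ x < b ++ y ↔ a < b)
  | [], b, x, y, hab, _ => absurd (List.nil_prefix) hab
  | a, [], x, y, _, hba => absurd (List.nil_prefix) hba
  | c :: a, d :: b, x, y, hab, hba => by
    simp only [List.cons_append, list_lt_iff_lex]
    rcases lt_trichotomy c d with h | rfl | h
    · constructor <;> intro _ <;> exact List.Lex.rel h
    · rw [List.lex_cons_iff, List.lex_cons_iff, ← @list_lt_iff_lex _ _ (a ++ x),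
        ← @list_lt_iff_lex _ _ a]
      exact lex_append_iff a b x y
        (fun hp => hab (List.cons_prefix_cons.2 ⟨rfl, hp⟩))
        (fun hp => hba (List.cons_prefix_cons.2 ⟨rfl, hp⟩))
    · constructor <;> intro hl <;> cases hl with
      | rel h' => exact absurd h' (lt_asymm h)
      | cons h' => exact absurd rfl (ne_of_gt h)

theorem not_drop_prefix_drop {α : Type*} [LinearOrder α] (w : List α) (s : α)
    (hs : s ∉ w) {i j : ℕ} (hij : i ≠ j) (hi : i < (w ++ [s]).length)
    (hj : j < (w ++ [s]).length) : ¬ (w ++ [s]).drop i <+: (w ++ [s]).drop j := by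
  intro hp
  set u := w ++ [s] with hu
  have hL : u.length = w.length + 1 := by simp [hu]
  have hle : u.length - i ≤ u.length - j := by
    simpa using hp.length_le
  have hji : j < i := by omega
  have hk : u.length - i - 1 < (u.drop i).length := by
    simp [List.length_drop]; omega
  have h1 : (u.drop i)[u.length - i - 1]'hk = s := by
    rw [List.getElem_drop]
    have : i + (u.length - i - 1) = w.length := by omega
    simp only [this, hu]
    rw [List.getElem_append_right (by simp at hL ⊢; omega)]
    simp
  have hk2 : u.length - i - 1 < (u.drop j).length := by
    simp [List.length_drop]; omega
  have h2 : (u.drop j)[u.length - i - 1]'hk2 = s := by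
    rw [← hp.getElem hk]; exact h1
  rw [List.getElem_drop] at h2
  have hlt : j + (u.length - i - 1) < w.length := by omega
  have h3 : w[j + (u.length - i - 1)]'hlt = s :=
    (List.getElem_append_left (bs := [s]) hlt).symm.trans h2
  exact hs (h3 ▸ List.getElem_mem hlt)

theorem rotate_lt_iff_drop_lt_of_sentinel {α : Type*} [LinearOrder α]
    (w : List α) (s : α) (hs : s ∉ w) :
    (∀ i j : ℕ, i < (w ++ [s]).length → j < (w ++ [s]).length →
      ((w ++ [s]).rotate i < (w ++ [s]).rotate j ↔
        (w ++ [s]).drop i < (w ++ [s]).drop j)) ∧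
    (∀ (n : ℕ) (π : Equiv.Perm (Fin n)),
      IsBWArray (w ++ [s]) π ↔ IsSuffixArray (w ++ [s]) π) := by
  have main : ∀ i j : ℕ, i < (w ++ [s]).length → j < (w ++ [s]).length →
      ((w ++ [s]).rotate i < (w ++ [s]).rotate j ↔
        (w ++ [s]).drop i < (w ++ [s]).drop j) := by
    intro i j hi hj
    by_cases hij : i = j
    · subst hij
      exact ⟨fun h => absurd h (lt_irrefl _), fun h => absurd h (lt_irrefl _)⟩
    · rw [List.rotate_eq_drop_append_take hi.le, List.rotate_eq_drop_append_take hj.le]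
      exact lex_append_iff _ _ _ _ (not_drop_prefix_drop w s hs hij hi hj)
        (not_drop_prefix_drop w s hs (Ne.symm hij) hj hi)
  refine ⟨main, fun n π => ?_⟩
  constructor
  · rintro ⟨hlen, h⟩
    exact ⟨hlen, fun i j hij => (main _ _ (by rw [hlen]; exact (π i).isLt)
      (by rw [hlen]; exact (π j).isLt)).1 (h i j hij)⟩
  · rintro ⟨hlen, h⟩
    exact ⟨hlen, fun i j hij => (main _ _ (by rw [hlen]; exact (π i).isLt)
      (by rw [hlen]; exact (π j).isLt)).2 (h i j hij)⟩
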